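/- There exist p.f.d. rectangle decomposable ℝ²-persistence modules M and N with d_I(M,N) = 1 and d_B(M,N) = 2. Concretely, take B(M) = {(−3,1)×(−1,3), (−1,3)×(−3,1), (−1,1)×(−1,1)} and B(N) = {(−2,2)×(−2,2)}: then M and N are 1-interleaved, but every matching between B(M) and B(N) leaves an ε-significant interval (for all ε < 4) unmatched, and no ε-matching exists for ε < 2. -/

import Mathlib

open CategoryTheory Classical

noncomputable section

/-- Convexity of a subset of a poset. -/
def IsConvex {P : Type} [Preorder P] (I : Set P) : Prop :=
  ∀ ⦃p q r : P⦄, p ∈ I → q ∈ I → p ≤ r → r ≤ q → r ∈ I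

/-- Zigzag connectivity within a subset. -/
def ZigzagConnected {P : Type} [Preorder P] (I : Set P) : Prop :=
  ∀ p ∈ I, ∀ q ∈ I,
    Relation.ReflTransGen (fun a b => a ∈ I ∧ b ∈ I ∧ (a ≤ b ∨ b ≤ a)) p q

/-- An interval in a poset: nonempty, convex, and zigzag connected. -/
def IsIntervalSet {P : Type} [Preorder P] (I : Set P) : Prop :=
  I.Nonempty ∧ IsConvex I ∧ ZigzagConnected I

open scoped Classical in
/-- The pointwise vector space of the interval module: `k` (as `⊤`) on `I`, `0` off `I`. -/
def objSub (k : Type) [Field k] {P : Type} [Preorder P] (I : Set P) (p : P) : Submodule k k :=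
  if p ∈ I then ⊤ else ⊥

open scoped Classical in
/-- The interval persistence module `𝕀^I` as a functor `P ⥤ ModuleCat k`. -/
def intervalModule (k : Type) [Field k] {P : Type} [Preorder P] (I : Set P)
    (hI : IsConvex I) : P ⥤ ModuleCat.{0} k where
  obj p := ModuleCat.of k (objSub k I p)
  map {p q} h :=
    if hpq : p ∈ I ∧ q ∈ I then
      ModuleCat.ofHom
        { toFun := fun x => ⟨(x : k), by simp [objSub, hpq.2]⟩
          map_add' := by intros; rfl
          map_smul' := by intros; rfl }
    else 0
  map_id := by
    intro p
    try dsimp only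
    by_cases hp : p ∈ I
    · rw [dif_pos ⟨hp, hp⟩]; rfl
    · rw [dif_neg (fun h => hp h.1)]
      haveI : Subsingleton ↥(objSub k I p) := by
        rw [objSub, if_neg hp]; infer_instance
      apply ModuleCat.hom_ext; apply LinearMap.ext; intro x
      exact this.allEq _ _
  map_comp := by
    intro p q r hpq hqr
    try dsimp only
    by_cases hpr : p ∈ I ∧ r ∈ I
    · have hq : q ∈ I := hI hpr.1 hpr.2 (leOfHom hpq) (leOfHom hqr)
      rw [dif_pos hpr, dif_pos ⟨hpr.1, hq⟩, dif_pos ⟨hq, hpr.2⟩]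
      rfl
    · rw [dif_neg hpr]
      by_cases hp : p ∈ I
      · have hr : r ∉ I := fun hr => hpr ⟨hp, hr⟩
        haveI : Subsingleton ↥(objSub k I r) := by
          rw [objSub, if_neg hr]; infer_instance
        apply ModuleCat.hom_ext; apply LinearMap.ext; intro x
        exact this.allEq _ _
      · haveI : Subsingleton ↥(objSub k I p) := by
          rw [objSub, if_neg hp]; infer_instance
        apply ModuleCat.hom_ext; apply LinearMap.ext; intro x
        have hx : x = 0 := this.allEq x 0
        rw [hx]
        simp

open DirectSum

open scoped ENNReal

/-- Direct sum of a family of persistence modules. -/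
def dsumF (k : Type) [Field k] {P : Type} [Preorder P] {ι : Type}
    (F : ι → P ⥤ ModuleCat.{0} k) : P ⥤ ModuleCat.{0} k where
  obj p := ModuleCat.of k (⨁ i, ((F i).obj p : Type))
  map {p q} h := ModuleCat.ofHom
    (DFinsupp.mapRange.linearMap (fun i => ((F i).map h).hom))
  map_id := by
    intro p
    try dsimp only
    simp only [CategoryTheory.Functor.map_id]
    apply ModuleCat.hom_ext; apply LinearMap.ext; intro x
    apply DFinsupp.ext; intro i
    rfl
  map_comp := by
    intro p q r hpq hqr
    try dsimp only
    simp only [CategoryTheory.Functor.map_comp]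
    apply ModuleCat.hom_ext; apply LinearMap.ext; intro x
    apply DFinsupp.ext; intro i
    rfl

/-- Use the preorder category structure on `Fin n → ℝ`. -/
instance RnCat (n : ℕ) : Category (Fin n → ℝ) := Preorder.smallCategory _

/-- Diagonal translation by `ε` as an endofunctor of the poset `Fin n → ℝ`. -/
def transl (n : ℕ) (ε : ℝ) : (Fin n → ℝ) ⥤ (Fin n → ℝ) :=
  Monotone.functor (f := fun p i => p i + ε)
    (fun _ _ hab i => by have := hab i; dsimp only; linarith)

/-- `M` and `N` are `ε`-interleaved `ℝⁿ`-persistence modules. -/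
def Interleaved (k : Type) [Field k] {n : ℕ} (ε : ℝ)
    (M N : (Fin n → ℝ) ⥤ ModuleCat.{0} k) : Prop :=
  ∃ _hε : 0 ≤ ε, ∃ (f : M ⟶ transl n ε ⋙ N) (g : N ⟶ transl n ε ⋙ M),
    (∀ p : Fin n → ℝ, f.app p ≫ g.app (fun i => p i + ε) =
      M.map (homOfLE (show p ≤ fun i => p i + ε + ε from
        fun i => by show p i ≤ p i + ε + ε; linarith))) ∧
    (∀ p : Fin n → ℝ, g.app p ≫ f.app (fun i => p i + ε) =
      N.map (homOfLE (show p ≤ fun i => p i + ε + ε from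
        fun i => by show p i ≤ p i + ε + ε; linarith)))

/-- An interval `I ⊆ ℝⁿ` is `δ`-trivial: it contains no pair `p ≤ p + δ`. -/
def SetTrivial {n : ℕ} (δ : ℝ) (I : Set (Fin n → ℝ)) : Prop :=
  ¬ ∃ p, p ∈ I ∧ (fun i => p i + δ) ∈ I

/-- Barcode data: an indexed family of nonempty convex intervals in `ℝⁿ`. -/
structure Barcode (n : ℕ) where
  ι : Type
  I : ι → Set (Fin n → ℝ)
  nonempty : ∀ i, (I i).Nonempty
  conv : ∀ i, IsConvex (I i)

/-- The interval decomposable module associated to barcode data. -/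
def Barcode.module (k : Type) [Field k] {n : ℕ} (B : Barcode n) :
    (Fin n → ℝ) ⥤ ModuleCat.{0} k :=
  dsumF k fun i => intervalModule k (B.I i) (B.conv i)

/-- `B` is pointwise finite dimensional. -/
def Barcode.pfd (k : Type) [Field k] {n : ℕ} (B : Barcode n) : Prop :=
  ∀ p : Fin n → ℝ, Module.Finite k ((B.module k).obj p)

/-- An `ε`-matching between two barcodes: a partial bijection such that unmatched
intervals are `2ε`-trivial and matched intervals are `ε`-interleaved. -/
def Matched (k : Type) [Field k] {n : ℕ} (ε : ℝ) (B C : Barcode n) : Prop :=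
  0 ≤ ε ∧ ∃ (A : Set B.ι) (A' : Set C.ι) (e : A ≃ A'),
    (∀ i ∉ A, SetTrivial (2 * ε) (B.I i)) ∧
    (∀ j ∉ A', SetTrivial (2 * ε) (C.I j)) ∧
    (∀ i : A, Interleaved k ε
      (intervalModule k (B.I i) (B.conv i))
      (intervalModule k (C.I (e i)) (C.conv (e i))))

/-- The interleaving distance, valued in `ℝ≥0∞`. -/
def dInt (k : Type) [Field k] {n : ℕ} (M N : (Fin n → ℝ) ⥤ ModuleCat.{0} k) : ℝ≥0∞ :=
  ⨅ (ε : ℝ) (_ : Interleaved k ε M N), ENNReal.ofReal ε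

/-- The bottleneck distance between barcodes, valued in `ℝ≥0∞`. -/
def dBot (k : Type) [Field k] {n : ℕ} (B C : Barcode n) : ℝ≥0∞ :=
  ⨅ (ε : ℝ) (_ : Matched k ε B C), ENNReal.ofReal ε

/-- Rectangles: products of real intervals. -/
def rectSet {n : ℕ} (R : Fin n → Set ℝ) : Set (Fin n → ℝ) := {x | ∀ i, x i ∈ R i}

theorem rectSet_convex {n : ℕ} (R : Fin n → Set ℝ) (h : ∀ i, (R i).OrdConnected) :
    IsConvex (rectSet R) := by
  intro p q r hp hq hpr hrq i
  exact (h i).out (hp i) (hq i) ⟨hpr i, hrq i⟩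

/-- A barcode consists of rectangles. -/
def IsRectBarcode {n : ℕ} (B : Barcode n) : Prop :=
  ∀ i, ∃ R : Fin n → Set ℝ,
    (∀ j, (R j).Nonempty ∧ (R j).OrdConnected) ∧ B.I i = rectSet R

/-- The open rectangle `(a,b) × (c,d) ⊆ ℝ²`. -/
def rect2 (a b c d : ℝ) : Set (Fin 2 → ℝ) := rectSet ![Set.Ioo a b, Set.Ioo c d]

theorem rect2_conv (a b c d : ℝ) : IsConvex (rect2 a b c d) := by
  apply rectSet_convex
  intro j
  fin_cases j
  · simpa using Set.ordConnected_Ioo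
  · simpa using Set.ordConnected_Ioo

theorem rect2_nonempty {a b c d : ℝ} (h1 : a < b) (h2 : c < d) :
    (rect2 a b c d).Nonempty := by
  refine ⟨![(a + b) / 2, (c + d) / 2], fun i => ?_⟩
  fin_cases i
  · simp only [rect2, rectSet]
    constructor <;> (simp; linarith)
  · simp only [rect2, rectSet]
    constructor <;> (simp; linarith)

/-- The barcode `{(−3,1)×(−1,3), (−1,3)×(−3,1), (−1,1)×(−1,1)}`. -/
def B15 : Barcode 2 where
  ι := Fin 3
  I := ![rect2 (-3) 1 (-1) 3, rect2 (-1) 3 (-3) 1, rect2 (-1) 1 (-1) 1]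
  nonempty := by
    intro i
    fin_cases i
    · exact rect2_nonempty (by norm_num) (by norm_num)
    · exact rect2_nonempty (by norm_num) (by norm_num)
    · exact rect2_nonempty (by norm_num) (by norm_num)
  conv := by
    intro i
    fin_cases i
    · exact rect2_conv _ _ _ _
    · exact rect2_conv _ _ _ _
    · exact rect2_conv _ _ _ _

/-- The barcode `{(−2,2)×(−2,2)}`. -/
def N15 : Barcode 2 where
  ι := Fin 1
  I := ![rect2 (-2) 2 (-2) 2]
  nonempty := by
    intro i
    fin_cases i
    exact rect2_nonempty (by norm_num) (by norm_num)
  conv := by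
    intro i
    fin_cases i
    exact rect2_conv _ _ _ _
namespace Ex15
open DirectSum

variable {k : Type} [Field k]

lemma mem_rect2 {a b c d : ℝ} {x : Fin 2 → ℝ} :
    x ∈ rect2 a b c d ↔ (a < x 0 ∧ x 0 < b) ∧ (c < x 1 ∧ x 1 < d) := by
  constructor
  · intro h; exact ⟨h 0, h 1⟩
  · rintro ⟨h0, h1⟩ i; fin_cases i <;> simpa

lemma objSub_subsingleton {P : Type} [Preorder P] {I : Set P} {p : P} (h : p ∉ I) :
    Subsingleton (objSub k I p) := by
  rw [objSub, if_neg h]; infer_instance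

/-- a scalar-multiplication morphism between interval pieces -/
def scalMap (c : k) {P : Type} [Preorder P] (I J : Set P) (p q : P) :
    objSub k I p →ₗ[k] objSub k J q :=
  if h : p ∈ I ∧ q ∈ J then
    { toFun := fun x => ⟨c * (x : k), by rw [objSub, if_pos h.2]; trivial⟩
      map_add' := by intro x y; apply Subtype.ext; simp [mul_add]
      map_smul' := by intro m x; apply Subtype.ext; simp; ring }
  else 0

lemma scalMap_coe (c : k) {P : Type} [Preorder P] {I J : Set P} {p q : P} (x : objSub k I p) :
    ((scalMap c I J p q x : objSub k J q) : k) = if p ∈ I ∧ q ∈ J then c * (x : k) else 0 := by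
  rw [scalMap]; split_ifs with h
  · rfl
  · simp

lemma intervalModule_map_eq {P : Type} [Preorder P] {I : Set P} (hI : IsConvex I)
    {p q : P} (h : p ⟶ q) :
    ((intervalModule k I hI).map h).hom = scalMap 1 I I p q := by
  apply LinearMap.ext; intro x
  apply Subtype.ext
  erw [scalMap_coe]
  unfold intervalModule
  dsimp only
  split_ifs with hpq
  · simp only [one_mul]; rfl
  · simp; rfl

lemma dsumF_map_lof {P : Type} [Preorder P] {ι : Type} [DecidableEq ι]
    (F : ι → P ⥤ ModuleCat.{0} k) {p q : P} (h : p ⟶ q) (i : ι) (x : (F i).obj p) :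
    (dsumF k F).map h (DirectSum.lof k ι (fun j => ((F j).obj p : Type)) i x) =
      DirectSum.lof k ι (fun j => ((F j).obj q : Type)) i ((F i).map h x) := by
  exact DFinsupp.mapRange_single (hf := fun i => map_zero ((F i).map h).hom)

end Ex15
namespace Ex15
open DirectSum

variable {k : Type} [Field k]

/-- square-commutation for scalMap against interval maps -/
lemma scalMap_sq (c : k) {P : Type} [Preorder P] {I J : Set P} (hI : IsConvex I) (hJ : IsConvex J)
    {p q p' q' : P} (h : p ⟶ q) (h' : p' ⟶ q')
    (cond : p ∈ I → ((q ∈ I ∧ q' ∈ J) ↔ (p' ∈ J ∧ q' ∈ J)))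
    (x : objSub k I p) :
    scalMap c I J q q' ((intervalModule k I hI).map h x) =
      (intervalModule k J hJ).map h' (scalMap c I J p p' x) := by
  have e1 : (intervalModule k I hI).map h x = scalMap 1 I I p q x :=
    LinearMap.congr_fun (intervalModule_map_eq hI h) x
  have e2 : (intervalModule k J hJ).map h' (scalMap c I J p p' x)
      = scalMap 1 J J p' q' (scalMap c I J p p' x) :=
    LinearMap.congr_fun (intervalModule_map_eq hJ h') (scalMap c I J p p' x)
  rw [e1, e2]
  apply Subtype.ext
  simp only [scalMap_coe]
  split_ifs <;> first | ring1 | (exfalso; tauto)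

lemma scalMap_comp_val (c1 c2 c3 : k) {P : Type} [Preorder P] {I J K : Set P} {p q r : P}
    (hc : c3 = c2 * c1)
    (cond : p ∈ I → (q ∈ J ∧ r ∈ K ↔ r ∈ K))
    (x : objSub k I p) :
    scalMap c2 J K q r (scalMap c1 I J p q x) = scalMap c3 I K p r x := by
  apply Subtype.ext
  simp only [scalMap_coe]
  subst hc
  split_ifs <;> first | ring1 | (exfalso; tauto)

lemma scalMap_comp_zero (c1 c2 : k) {P : Type} [Preorder P] {I J K : Set P} {p q r : P}
    (cond : ¬(p ∈ I ∧ q ∈ J ∧ r ∈ K))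
    (x : objSub k I p) :
    scalMap c2 J K q r (scalMap c1 I J p q x) = 0 := by
  apply Subtype.ext
  simp only [scalMap_coe, ZeroMemClass.coe_zero]
  split_ifs <;> first | ring1 | (exfalso; tauto)

lemma scalMap_zero_val (c : k) {P : Type} [Preorder P] {I J : Set P} {p q : P}
    (cond : ¬(p ∈ I ∧ q ∈ J)) (x : objSub k I p) :
    scalMap c I J p q x = 0 := by
  apply Subtype.ext
  rw [scalMap_coe, if_neg cond, ZeroMemClass.coe_zero]

lemma scalMap_add_apply (a b : k) {P : Type} [Preorder P] {I J : Set P} {p q : P}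
    (x : objSub k I p) :
    scalMap a I J p q x + scalMap b I J p q x = scalMap (a + b) I J p q x := by
  apply Subtype.ext
  simp only [Submodule.coe_add, scalMap_coe]
  split_ifs <;> ring

end Ex15
namespace Ex15

section Geometry

lemma condF0 {p q : Fin 2 → ℝ} (hpq : p ≤ q) (hp : p ∈ rect2 (-3) 1 (-1) 3) :
    ((q ∈ rect2 (-3) 1 (-1) 3 ∧ (fun l => q l + 1) ∈ rect2 (-2) 2 (-2) 2) ↔
      ((fun l => p l + 1) ∈ rect2 (-2) 2 (-2) 2 ∧ (fun l => q l + 1) ∈ rect2 (-2) 2 (-2) 2)) := by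
  have h0 : p 0 ≤ q 0 := hpq 0
  have h1 : p 1 ≤ q 1 := hpq 1
  simp only [mem_rect2] at hp ⊢
  obtain ⟨⟨hp1, hp2⟩, hp3, hp4⟩ := hp
  constructor <;> rintro ⟨⟨⟨a1, a2⟩, a3, a4⟩, ⟨⟨b1, b2⟩, b3, b4⟩⟩ <;>
    exact ⟨⟨⟨by linarith, by linarith⟩, by linarith, by linarith⟩, ⟨⟨b1, b2⟩, b3, b4⟩⟩

lemma condF1 {p q : Fin 2 → ℝ} (hpq : p ≤ q) (hp : p ∈ rect2 (-1) 3 (-3) 1) :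
    ((q ∈ rect2 (-1) 3 (-3) 1 ∧ (fun l => q l + 1) ∈ rect2 (-2) 2 (-2) 2) ↔
      ((fun l => p l + 1) ∈ rect2 (-2) 2 (-2) 2 ∧ (fun l => q l + 1) ∈ rect2 (-2) 2 (-2) 2)) := by
  have h0 : p 0 ≤ q 0 := hpq 0
  have h1 : p 1 ≤ q 1 := hpq 1
  simp only [mem_rect2] at hp ⊢
  obtain ⟨⟨hp1, hp2⟩, hp3, hp4⟩ := hp
  constructor <;> rintro ⟨⟨⟨a1, a2⟩, a3, a4⟩, ⟨⟨b1, b2⟩, b3, b4⟩⟩ <;>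
    exact ⟨⟨⟨by linarith, by linarith⟩, by linarith, by linarith⟩, ⟨⟨b1, b2⟩, b3, b4⟩⟩

lemma condF2 {p q : Fin 2 → ℝ} (hpq : p ≤ q) (hp : p ∈ rect2 (-1) 1 (-1) 1) :
    ((q ∈ rect2 (-1) 1 (-1) 1 ∧ (fun l => q l + 1) ∈ rect2 (-2) 2 (-2) 2) ↔
      ((fun l => p l + 1) ∈ rect2 (-2) 2 (-2) 2 ∧ (fun l => q l + 1) ∈ rect2 (-2) 2 (-2) 2)) := by
  have h0 : p 0 ≤ q 0 := hpq 0
  have h1 : p 1 ≤ q 1 := hpq 1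
  simp only [mem_rect2] at hp ⊢
  obtain ⟨⟨hp1, hp2⟩, hp3, hp4⟩ := hp
  constructor <;> rintro ⟨⟨⟨a1, a2⟩, a3, a4⟩, ⟨⟨b1, b2⟩, b3, b4⟩⟩ <;>
    exact ⟨⟨⟨by linarith, by linarith⟩, by linarith, by linarith⟩, ⟨⟨b1, b2⟩, b3, b4⟩⟩

lemma condG0 {p q : Fin 2 → ℝ} (hpq : p ≤ q) (hp : p ∈ rect2 (-2) 2 (-2) 2) :
    ((q ∈ rect2 (-2) 2 (-2) 2 ∧ (fun l => q l + 1) ∈ rect2 (-3) 1 (-1) 3) ↔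
      ((fun l => p l + 1) ∈ rect2 (-3) 1 (-1) 3 ∧ (fun l => q l + 1) ∈ rect2 (-3) 1 (-1) 3)) := by
  have h0 : p 0 ≤ q 0 := hpq 0
  have h1 : p 1 ≤ q 1 := hpq 1
  simp only [mem_rect2] at hp ⊢
  obtain ⟨⟨hp1, hp2⟩, hp3, hp4⟩ := hp
  constructor <;> rintro ⟨⟨⟨a1, a2⟩, a3, a4⟩, ⟨⟨b1, b2⟩, b3, b4⟩⟩ <;>
    exact ⟨⟨⟨by linarith, by linarith⟩, by linarith, by linarith⟩, ⟨⟨b1, b2⟩, b3, b4⟩⟩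

lemma condG1 {p q : Fin 2 → ℝ} (hpq : p ≤ q) (hp : p ∈ rect2 (-2) 2 (-2) 2) :
    ((q ∈ rect2 (-2) 2 (-2) 2 ∧ (fun l => q l + 1) ∈ rect2 (-1) 3 (-3) 1) ↔
      ((fun l => p l + 1) ∈ rect2 (-1) 3 (-3) 1 ∧ (fun l => q l + 1) ∈ rect2 (-1) 3 (-3) 1)) := by
  have h0 : p 0 ≤ q 0 := hpq 0
  have h1 : p 1 ≤ q 1 := hpq 1
  simp only [mem_rect2] at hp ⊢
  obtain ⟨⟨hp1, hp2⟩, hp3, hp4⟩ := hp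
  constructor <;> rintro ⟨⟨⟨a1, a2⟩, a3, a4⟩, ⟨⟨b1, b2⟩, b3, b4⟩⟩ <;>
    exact ⟨⟨⟨by linarith, by linarith⟩, by linarith, by linarith⟩, ⟨⟨b1, b2⟩, b3, b4⟩⟩

lemma condG2 {p q : Fin 2 → ℝ} (hpq : p ≤ q) (hp : p ∈ rect2 (-2) 2 (-2) 2) :
    ((q ∈ rect2 (-2) 2 (-2) 2 ∧ (fun l => q l + 1) ∈ rect2 (-1) 1 (-1) 1) ↔
      ((fun l => p l + 1) ∈ rect2 (-1) 1 (-1) 1 ∧ (fun l => q l + 1) ∈ rect2 (-1) 1 (-1) 1)) := by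
  have h0 : p 0 ≤ q 0 := hpq 0
  have h1 : p 1 ≤ q 1 := hpq 1
  simp only [mem_rect2] at hp ⊢
  obtain ⟨⟨hp1, hp2⟩, hp3, hp4⟩ := hp
  constructor <;> rintro ⟨⟨⟨a1, a2⟩, a3, a4⟩, ⟨⟨b1, b2⟩, b3, b4⟩⟩ <;>
    exact ⟨⟨⟨by linarith, by linarith⟩, by linarith, by linarith⟩, ⟨⟨b1, b2⟩, b3, b4⟩⟩

/-- composite conditions f;g, diagonal cases -/
lemma v0 {p : Fin 2 → ℝ} (hp : p ∈ rect2 (-3) 1 (-1) 3) :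
    ((fun l => p l + 1) ∈ rect2 (-2) 2 (-2) 2 ∧ (fun l => p l + 1 + 1) ∈ rect2 (-3) 1 (-1) 3 ↔
      (fun l => p l + 1 + 1) ∈ rect2 (-3) 1 (-1) 3) := by
  simp only [mem_rect2] at hp ⊢
  obtain ⟨⟨hp1, hp2⟩, hp3, hp4⟩ := hp
  constructor
  · rintro ⟨_, h⟩; exact h
  · rintro ⟨⟨a1, a2⟩, a3, a4⟩
    exact ⟨⟨⟨by linarith, by linarith⟩, by linarith, by linarith⟩, ⟨⟨a1, a2⟩, a3, a4⟩⟩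

lemma v1 {p : Fin 2 → ℝ} (hp : p ∈ rect2 (-1) 3 (-3) 1) :
    ((fun l => p l + 1) ∈ rect2 (-2) 2 (-2) 2 ∧ (fun l => p l + 1 + 1) ∈ rect2 (-1) 3 (-3) 1 ↔
      (fun l => p l + 1 + 1) ∈ rect2 (-1) 3 (-3) 1) := by
  simp only [mem_rect2] at hp ⊢
  obtain ⟨⟨hp1, hp2⟩, hp3, hp4⟩ := hp
  constructor
  · rintro ⟨_, h⟩; exact h
  · rintro ⟨⟨a1, a2⟩, a3, a4⟩
    exact ⟨⟨⟨by linarith, by linarith⟩, by linarith, by linarith⟩, ⟨⟨a1, a2⟩, a3, a4⟩⟩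

/-- composite conditions g;f -/
lemma w0 {p : Fin 2 → ℝ} (hp : p ∈ rect2 (-2) 2 (-2) 2) :
    ((fun l => p l + 1) ∈ rect2 (-3) 1 (-1) 3 ∧ (fun l => p l + 1 + 1) ∈ rect2 (-2) 2 (-2) 2 ↔
      (fun l => p l + 1 + 1) ∈ rect2 (-2) 2 (-2) 2) := by
  simp only [mem_rect2] at hp ⊢
  obtain ⟨⟨hp1, hp2⟩, hp3, hp4⟩ := hp
  constructor
  · rintro ⟨_, h⟩; exact h
  · rintro ⟨⟨a1, a2⟩, a3, a4⟩
    exact ⟨⟨⟨by linarith, by linarith⟩, by linarith, by linarith⟩, ⟨⟨a1, a2⟩, a3, a4⟩⟩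

lemma w1 {p : Fin 2 → ℝ} (hp : p ∈ rect2 (-2) 2 (-2) 2) :
    ((fun l => p l + 1) ∈ rect2 (-1) 3 (-3) 1 ∧ (fun l => p l + 1 + 1) ∈ rect2 (-2) 2 (-2) 2 ↔
      (fun l => p l + 1 + 1) ∈ rect2 (-2) 2 (-2) 2) := by
  simp only [mem_rect2] at hp ⊢
  obtain ⟨⟨hp1, hp2⟩, hp3, hp4⟩ := hp
  constructor
  · rintro ⟨_, h⟩; exact h
  · rintro ⟨⟨a1, a2⟩, a3, a4⟩
    exact ⟨⟨⟨by linarith, by linarith⟩, by linarith, by linarith⟩, ⟨⟨a1, a2⟩, a3, a4⟩⟩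

lemma w2 {p : Fin 2 → ℝ} (hp : p ∈ rect2 (-2) 2 (-2) 2) :
    ((fun l => p l + 1) ∈ rect2 (-1) 1 (-1) 1 ∧ (fun l => p l + 1 + 1) ∈ rect2 (-2) 2 (-2) 2 ↔
      (fun l => p l + 1 + 1) ∈ rect2 (-2) 2 (-2) 2) := by
  simp only [mem_rect2] at hp ⊢
  obtain ⟨⟨hp1, hp2⟩, hp3, hp4⟩ := hp
  constructor
  · rintro ⟨_, h⟩; exact h
  · rintro ⟨⟨a1, a2⟩, a3, a4⟩
    exact ⟨⟨⟨by linarith, by linarith⟩, by linarith, by linarith⟩, ⟨⟨a1, a2⟩, a3, a4⟩⟩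

/-- off-diagonal / small-square vanishing conditions for f;g -/
lemma zoff {p : Fin 2 → ℝ} {a b c d a' b' c' d' : ℝ}
    (hy : d' ≤ c + 2 ∨ b' ≤ a + 2)
    : ¬(p ∈ rect2 a b c d ∧ (fun l => p l + 1) ∈ rect2 (-2) 2 (-2) 2 ∧
        (fun l => p l + 1 + 1) ∈ rect2 a' b' c' d') := by
  rintro ⟨h1, _, h3⟩
  simp only [mem_rect2] at h1 h3
  obtain ⟨⟨a1, a2⟩, a3, a4⟩ := h1
  obtain ⟨⟨b1, b2⟩, b3, b4⟩ := h3
  rcases hy with h | h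
  · linarith
  · linarith

end Geometry

end Ex15
namespace Ex15
open DirectSum

variable {k : Type} [Field k]

set_option maxHeartbeats 1000000

/-- weights for the reverse morphism -/
def dw : Fin 3 → k := ![1, 1, -1]

lemma dw0 : dw (0 : Fin 3) = (1 : k) := rfl
lemma dw1 : dw (1 : Fin 3) = (1 : k) := rfl
lemma dw2 : dw (2 : Fin 3) = (-1 : k) := rfl

def fApp (p : Fin 2 → ℝ) :
    (B15.module k).obj p ⟶ (N15.module k).obj (fun l => p l + 1) :=
  ModuleCat.ofHom (DirectSum.toModule k (Fin 3) _ fun i =>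
    (DirectSum.lof k (Fin 1)
        (fun j => ((intervalModule k (N15.I j) (N15.conv j)).obj (fun l => p l + 1) : Type)) 0).comp
      (scalMap 1 (B15.I i) (N15.I (0 : Fin 1)) p (fun l => p l + 1)))

def gApp (p : Fin 2 → ℝ) :
    (N15.module k).obj p ⟶ (B15.module k).obj (fun l => p l + 1) :=
  ModuleCat.ofHom (DirectSum.toModule k (Fin 1) _ fun j =>
    ∑ i : Fin 3, (DirectSum.lof k (Fin 3)
        (fun i => ((intervalModule k (B15.I i) (B15.conv i)).obj (fun l => p l + 1) : Type)) i).comp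
      (scalMap (dw i) (N15.I j) (B15.I i) p (fun l => p l + 1)))

lemma M_map_lof {p q : Fin 2 → ℝ} (h : p ⟶ q) (i : Fin 3)
    (x : ((intervalModule k (B15.I i) (B15.conv i)).obj p : Type)) :
    (B15.module k).map h
        (DirectSum.lof k (Fin 3)
          (fun j => ((intervalModule k (B15.I j) (B15.conv j)).obj p : Type)) i x) =
      DirectSum.lof k (Fin 3)
          (fun j => ((intervalModule k (B15.I j) (B15.conv j)).obj q : Type)) i
        ((intervalModule k (B15.I i) (B15.conv i)).map h x) :=
  dsumF_map_lof (ι := Fin 3) (fun i => intervalModule k (B15.I i) (B15.conv i)) h i x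

lemma N_map_lof {p q : Fin 2 → ℝ} (h : p ⟶ q) (j : Fin 1)
    (x : ((intervalModule k (N15.I j) (N15.conv j)).obj p : Type)) :
    (N15.module k).map h
        (DirectSum.lof k (Fin 1)
          (fun j => ((intervalModule k (N15.I j) (N15.conv j)).obj p : Type)) j x) =
      DirectSum.lof k (Fin 1)
          (fun j => ((intervalModule k (N15.I j) (N15.conv j)).obj q : Type)) j
        ((intervalModule k (N15.I j) (N15.conv j)).map h x) :=
  dsumF_map_lof (ι := Fin 1) (fun j => intervalModule k (N15.I j) (N15.conv j)) h j x

lemma fApp_lof (p : Fin 2 → ℝ) (i : Fin 3)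
    (x : ((intervalModule k (B15.I i) (B15.conv i)).obj p : Type)) :
    fApp (k := k) p
        (DirectSum.lof k (Fin 3)
          (fun j => ((intervalModule k (B15.I j) (B15.conv j)).obj p : Type)) i x) =
      DirectSum.lof k (Fin 1)
          (fun j => ((intervalModule k (N15.I j) (N15.conv j)).obj (fun l => p l + 1) : Type)) 0
        (scalMap 1 (B15.I i) (N15.I (0 : Fin 1)) p (fun l => p l + 1) x) := by
  change (fApp (k := k) p).hom _ = _
  erw [fApp, ModuleCat.hom_ofHom]
  have h := DirectSum.toModule_lof (ι := Fin 3) (M := fun j => ((intervalModule k (B15.I j) (B15.conv j)).obj p : Type)) k i x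
    (φ := fun i => (DirectSum.lof k (Fin 1)
        (fun j => ((intervalModule k (N15.I j) (N15.conv j)).obj (fun l => p l + 1) : Type)) 0).comp
      (scalMap 1 (B15.I i) (N15.I (0 : Fin 1)) p (fun l => p l + 1)))
  exact h

lemma gApp_lof (p : Fin 2 → ℝ) (x : ((intervalModule k (N15.I (0 : Fin 1)) (N15.conv (0 : Fin 1))).obj p : Type)) :
    gApp (k := k) p
        (DirectSum.lof k (Fin 1)
          (fun j => ((intervalModule k (N15.I j) (N15.conv j)).obj p : Type)) 0 x) =
      ∑ i : Fin 3, DirectSum.lof k (Fin 3)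
          (fun i => ((intervalModule k (B15.I i) (B15.conv i)).obj (fun l => p l + 1) : Type)) i
        (scalMap (dw i) (N15.I (0 : Fin 1)) (B15.I i) p (fun l => p l + 1) x) := by
  change (gApp (k := k) p).hom _ = _
  erw [gApp, ModuleCat.hom_ofHom]
  have h := DirectSum.toModule_lof (M := fun j =>
      ((intervalModule k (N15.I j) (N15.conv j)).obj p : Type)) (ι := Fin 1) k (i := (0 : Fin 1)) x
      (φ := fun j => ∑ i : Fin 3, (DirectSum.lof k (Fin 3)
        (fun i => ((intervalModule k (B15.I i) (B15.conv i)).obj (fun l => p l + 1) : Type)) i).comp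
      (scalMap (dw i) (N15.I j) (B15.I i) p (fun l => p l + 1)))
  rw [LinearMap.sum_apply] at h
  exact h

end Ex15
namespace Ex15
open DirectSum

variable {k : Type} [Field k]

set_option maxHeartbeats 1000000

lemma scalMap_zero_scal {P : Type} [Preorder P] {I J : Set P} {p q : P} (x : objSub k I p) :
    scalMap (0 : k) I J p q x = 0 := by
  apply Subtype.ext
  rw [scalMap_coe, ZeroMemClass.coe_zero]
  split_ifs <;> ring1

lemma condF' (i : Fin 3) {p q : Fin 2 → ℝ} (hpq : p ≤ q) (hp : p ∈ B15.I i) :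
    ((q ∈ B15.I i ∧ (fun l => q l + 1) ∈ N15.I (0 : Fin 1)) ↔
      ((fun l => p l + 1) ∈ N15.I (0 : Fin 1) ∧ (fun l => q l + 1) ∈ N15.I (0 : Fin 1))) := by
  fin_cases i
  · exact condF0 hpq hp
  · exact condF1 hpq hp
  · exact condF2 hpq hp

lemma condG' (i : Fin 3) {p q : Fin 2 → ℝ} (hpq : p ≤ q) (hp : p ∈ N15.I (0 : Fin 1)) :
    ((q ∈ N15.I (0 : Fin 1) ∧ (fun l => q l + 1) ∈ B15.I i) ↔
      ((fun l => p l + 1) ∈ B15.I i ∧ (fun l => q l + 1) ∈ B15.I i)) := by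
  fin_cases i
  · exact condG0 hpq hp
  · exact condG1 hpq hp
  · exact condG2 hpq hp

lemma keydiag (i : Fin 3) (p : Fin 2 → ℝ) (x : objSub k (B15.I i) p) :
    scalMap (dw i) (N15.I (0 : Fin 1)) (B15.I i) (fun l => p l + 1) (fun l => p l + 1 + 1)
        (scalMap 1 (B15.I i) (N15.I (0 : Fin 1)) p (fun l => p l + 1) x) =
      scalMap 1 (B15.I i) (B15.I i) p (fun l => p l + 1 + 1) x := by
  fin_cases i
  · exact scalMap_comp_val 1 1 1 (one_mul 1).symm (fun hp => v0 hp) x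
  · exact scalMap_comp_val 1 1 1 (one_mul 1).symm (fun hp => v1 hp) x
  · exact (scalMap_comp_zero 1 (-1)
      (zoff (a := -1) (b := 1) (c := -1) (d := 1) (a' := -1) (b' := 1) (c' := -1) (d' := 1)
        (Or.inl (by norm_num))) x).trans
      (scalMap_zero_val 1 (by
        rintro ⟨h1, h2⟩
        have h1' : p ∈ rect2 (-1) 1 (-1) 1 := h1
        rw [mem_rect2] at h1' h2
        clear h1
        rename' h1' => h1
        obtain ⟨⟨a1, a2⟩, a3, a4⟩ := h1
        obtain ⟨⟨b1, b2⟩, b3, b4⟩ := h2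
        linarith) x).symm

lemma keyoff (i i' : Fin 3) (hb : i' ≠ i) (p : Fin 2 → ℝ) (x : objSub k (B15.I i) p) :
    scalMap (dw i') (N15.I (0 : Fin 1)) (B15.I i') (fun l => p l + 1) (fun l => p l + 1 + 1)
        (scalMap 1 (B15.I i) (N15.I (0 : Fin 1)) p (fun l => p l + 1) x) = 0 := by
  fin_cases i <;> fin_cases i'
  · exact absurd rfl hb
  · exact scalMap_comp_zero _ _ (zoff (Or.inl (by norm_num))) x
  · exact scalMap_comp_zero _ _ (zoff (Or.inl (by norm_num))) x
  · exact scalMap_comp_zero _ _ (zoff (Or.inr (by norm_num))) x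
  · exact absurd rfl hb
  · exact scalMap_comp_zero _ _ (zoff (Or.inr (by norm_num))) x
  · exact scalMap_comp_zero _ _ (zoff (Or.inr (by norm_num))) x
  · exact scalMap_comp_zero _ _ (zoff (Or.inl (by norm_num))) x
  · exact absurd rfl hb

end Ex15
namespace Ex15
open DirectSum

variable {k : Type} [Field k]

set_option maxHeartbeats 1600000

lemma w' (i : Fin 3) {p : Fin 2 → ℝ} (hp : p ∈ N15.I (0 : Fin 1)) :
    ((fun l => p l + 1) ∈ B15.I i ∧ (fun l => p l + 1 + 1) ∈ N15.I (0 : Fin 1) ↔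
      (fun l => p l + 1 + 1) ∈ N15.I (0 : Fin 1)) := by
  fin_cases i
  · exact w0 hp
  · exact w1 hp
  · exact w2 hp

lemma key1 (i : Fin 3) (p : Fin 2 → ℝ) (x : objSub k (B15.I i) p) :
    (∑ i' : Fin 3, DirectSum.lof k (Fin 3)
        (fun j => ((intervalModule k (B15.I j) (B15.conv j)).obj (fun l => p l + 1 + 1) : Type)) i'
        (scalMap (dw i') (N15.I (0 : Fin 1)) (B15.I i') (fun l => p l + 1) (fun l => p l + 1 + 1)
          (scalMap 1 (B15.I i) (N15.I (0 : Fin 1)) p (fun l => p l + 1) x)))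
      = DirectSum.lof k (Fin 3)
        (fun j => ((intervalModule k (B15.I j) (B15.conv j)).obj (fun l => p l + 1 + 1) : Type)) i
        (scalMap 1 (B15.I i) (B15.I i) p (fun l => p l + 1 + 1) x) := by
  rw [Finset.sum_eq_single i]
  · exact congrArg _ (keydiag i p x)
  · intro b _ hb
    erw [keyoff i b hb p x, map_zero]
  · intro hmem
    exact absurd (Finset.mem_univ i) hmem

lemma key3 (p : Fin 2 → ℝ) (x : objSub k (N15.I (0 : Fin 1)) p) :
    scalMap 1 (B15.I (0 : Fin 3)) (N15.I (0 : Fin 1)) (fun l => p l + 1) (fun l => p l + 1 + 1)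
        (scalMap (dw (0 : Fin 3)) (N15.I (0 : Fin 1)) (B15.I (0 : Fin 3)) p (fun l => p l + 1) x)
      + scalMap 1 (B15.I (1 : Fin 3)) (N15.I (0 : Fin 1)) (fun l => p l + 1) (fun l => p l + 1 + 1)
        (scalMap (dw (1 : Fin 3)) (N15.I (0 : Fin 1)) (B15.I (1 : Fin 3)) p (fun l => p l + 1) x)
      + scalMap 1 (B15.I (2 : Fin 3)) (N15.I (0 : Fin 1)) (fun l => p l + 1) (fun l => p l + 1 + 1)
        (scalMap (dw (2 : Fin 3)) (N15.I (0 : Fin 1)) (B15.I (2 : Fin 3)) p (fun l => p l + 1) x)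
      = scalMap 1 (N15.I (0 : Fin 1)) (N15.I (0 : Fin 1)) p (fun l => p l + 1 + 1) x := by
  have e0 := scalMap_comp_val (k := k) (dw (0 : Fin 3)) 1 (dw (0 : Fin 3)) (one_mul _).symm (w' 0) x
  have e1 := scalMap_comp_val (k := k) (dw (1 : Fin 3)) 1 (dw (1 : Fin 3)) (one_mul _).symm (w' 1) x
  have e2 := scalMap_comp_val (k := k) (dw (2 : Fin 3)) 1 (dw (2 : Fin 3)) (one_mul _).symm (w' 2) x
  rw [e0, e1, e2, scalMap_add_apply, scalMap_add_apply, dw0, dw1, dw2,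
    show (1 : k) + 1 + -1 = 1 by ring]

lemma key3' (p : Fin 2 → ℝ) (x : objSub k (N15.I (0 : Fin 1)) p) :
    DirectSum.lof k (Fin 1)
        (fun j => ((intervalModule k (N15.I j) (N15.conv j)).obj (fun l => p l + 1 + 1) : Type)) 0
        (scalMap 1 (B15.I (0 : Fin 3)) (N15.I (0 : Fin 1)) (fun l => p l + 1) (fun l => p l + 1 + 1)
          (scalMap (dw (0 : Fin 3)) (N15.I (0 : Fin 1)) (B15.I (0 : Fin 3)) p (fun l => p l + 1) x))
      + DirectSum.lof k (Fin 1)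
        (fun j => ((intervalModule k (N15.I j) (N15.conv j)).obj (fun l => p l + 1 + 1) : Type)) 0
        (scalMap 1 (B15.I (1 : Fin 3)) (N15.I (0 : Fin 1)) (fun l => p l + 1) (fun l => p l + 1 + 1)
          (scalMap (dw (1 : Fin 3)) (N15.I (0 : Fin 1)) (B15.I (1 : Fin 3)) p (fun l => p l + 1) x))
      + DirectSum.lof k (Fin 1)
        (fun j => ((intervalModule k (N15.I j) (N15.conv j)).obj (fun l => p l + 1 + 1) : Type)) 0
        (scalMap 1 (B15.I (2 : Fin 3)) (N15.I (0 : Fin 1)) (fun l => p l + 1) (fun l => p l + 1 + 1)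
          (scalMap (dw (2 : Fin 3)) (N15.I (0 : Fin 1)) (B15.I (2 : Fin 3)) p (fun l => p l + 1) x))
      = DirectSum.lof k (Fin 1)
        (fun j => ((intervalModule k (N15.I j) (N15.conv j)).obj (fun l => p l + 1 + 1) : Type)) 0
        (scalMap 1 (N15.I (0 : Fin 1)) (N15.I (0 : Fin 1)) p (fun l => p l + 1 + 1) x) := by
  have h := congrArg (DirectSum.lof k (Fin 1)
      (fun j => ((intervalModule k (N15.I j) (N15.conv j)).obj (fun l => p l + 1 + 1) : Type)) 0)
    (key3 p x)
  erw [map_add, map_add] at h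
  exact h

def fnat : B15.module k ⟶ transl 2 1 ⋙ N15.module k where
  app p := fApp p
  naturality := by
    intro p q h
    refine ModuleCat.hom_ext (DirectSum.linearMap_ext (ι := Fin 3) k fun i => LinearMap.ext fun x => ?_)
    show fApp q ((B15.module k).map h
        (DirectSum.lof k (Fin 3)
          (fun j => ((intervalModule k (B15.I j) (B15.conv j)).obj p : Type)) i x)) =
      (N15.module k).map ((transl 2 1).map h)
        (fApp p (DirectSum.lof k (Fin 3)
          (fun j => ((intervalModule k (B15.I j) (B15.conv j)).obj p : Type)) i x))
    rw [M_map_lof h i x, fApp_lof, fApp_lof]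
    exact (congrArg _ (scalMap_sq 1 (B15.conv i) (N15.conv (0 : Fin 1)) h ((transl 2 1).map h)
      (condF' i (leOfHom h)) x)).trans (N_map_lof ((transl 2 1).map h) 0 _).symm

def gnat : N15.module k ⟶ transl 2 1 ⋙ B15.module k where
  app p := gApp p
  naturality := by
    intro p q h
    refine ModuleCat.hom_ext (DirectSum.linearMap_ext (ι := Fin 1) k fun j => LinearMap.ext fun x => ?_)
    have hj : j = 0 := Subsingleton.elim j 0
    subst hj
    show gApp q ((N15.module k).map h
        (DirectSum.lof k (Fin 1)
          (fun j => ((intervalModule k (N15.I j) (N15.conv j)).obj p : Type)) 0 x)) =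
      (B15.module k).map ((transl 2 1).map h)
        (gApp p (DirectSum.lof k (Fin 1)
          (fun j => ((intervalModule k (N15.I j) (N15.conv j)).obj p : Type)) 0 x))
    erw [N_map_lof h 0 x, gApp_lof, gApp_lof, map_sum]
    refine Finset.sum_congr rfl fun i _ => ?_
    exact (congrArg _ (scalMap_sq (dw i) (N15.conv (0 : Fin 1)) (B15.conv i) h ((transl 2 1).map h)
      (condG' i (leOfHom h)) x)).trans (M_map_lof ((transl 2 1).map h) i _).symm

theorem interleaved1 : Interleaved k 1 (B15.module k) (N15.module k) := by
  refine ⟨zero_le_one, fnat, gnat, ?_, ?_⟩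
  · intro p
    refine ModuleCat.hom_ext (DirectSum.linearMap_ext (ι := Fin 3) k fun i => LinearMap.ext fun x => ?_)
    show gApp (fun l => p l + 1) (fApp p
        (DirectSum.lof k (Fin 3)
          (fun j => ((intervalModule k (B15.I j) (B15.conv j)).obj p : Type)) i x)) =
      (B15.module k).map (homOfLE _)
        (DirectSum.lof k (Fin 3)
          (fun j => ((intervalModule k (B15.I j) (B15.conv j)).obj p : Type)) i x)
    refine (congrArg (fun y => gApp (k := k) (fun l => p l + 1) y) (fApp_lof p i x)).trans ?_
    refine (gApp_lof _ _).trans ?_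
    refine (key1 i p x).trans ?_
    refine Eq.trans ?_ (M_map_lof (homOfLE _) i x).symm
    exact congrArg _ (LinearMap.congr_fun (intervalModule_map_eq _ _) x).symm
  · intro p
    refine ModuleCat.hom_ext (DirectSum.linearMap_ext (ι := Fin 1) k fun j => LinearMap.ext fun x => ?_)
    have hj : j = 0 := Subsingleton.elim j 0
    subst hj
    show fApp (fun l => p l + 1) (gApp p
        (DirectSum.lof k (Fin 1)
          (fun j => ((intervalModule k (N15.I j) (N15.conv j)).obj p : Type)) 0 x)) =
      (N15.module k).map (homOfLE _)
        (DirectSum.lof k (Fin 1)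
          (fun j => ((intervalModule k (N15.I j) (N15.conv j)).obj p : Type)) 0 x)
    refine (congrArg (fun y => fApp (k := k) (fun l => p l + 1) y) (gApp_lof p x)).trans ?_
    refine (map_sum (fApp (k := k) (fun l => p l + 1)).hom _ _).trans ?_
    refine (Fin.sum_univ_three _).trans ?_
    refine (congrArg₂ (· + ·) (congrArg₂ (· + ·) (fApp_lof _ _ _) (fApp_lof _ _ _))
      (fApp_lof _ _ _)).trans ?_
    refine (key3' p x).trans ?_
    refine Eq.trans ?_ (N_map_lof (homOfLE _) 0 x).symm
    exact congrArg _ (LinearMap.congr_fun (intervalModule_map_eq _ _) x).symm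

end Ex15
namespace Ex15
open DirectSum

variable {k : Type} [Field k]

set_option maxHeartbeats 1600000

instance : Fintype B15.ι := (inferInstance : Fintype (Fin 3))
instance : Fintype N15.ι := (inferInstance : Fintype (Fin 1))
instance : DecidableEq B15.ι := fun a b => (inferInstance : DecidableEq (Fin 3)) a b
instance : DecidableEq N15.ι := fun a b => (inferInstance : DecidableEq (Fin 1)) a b
instance : Subsingleton N15.ι := (inferInstance : Subsingleton (Fin 1))

lemma pfdB : B15.pfd k := by
  intro p
  haveI : ∀ i : Fin 3, Module.Finite k
      ((intervalModule k (B15.I i) (B15.conv i)).obj p : Type) :=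
    fun i => (inferInstance : Module.Finite k (objSub k (B15.I i) p))
  exact Module.Finite.equiv (DirectSum.linearEquivFunOnFintype k (Fin 3)
    (fun i => ((intervalModule k (B15.I i) (B15.conv i)).obj p : Type))).symm

lemma pfdN : N15.pfd k := by
  intro p
  haveI : ∀ i : Fin 1, Module.Finite k
      ((intervalModule k (N15.I i) (N15.conv i)).obj p : Type) :=
    fun i => (inferInstance : Module.Finite k (objSub k (N15.I i) p))
  exact Module.Finite.equiv (DirectSum.linearEquivFunOnFintype k (Fin 1)
    (fun i => ((intervalModule k (N15.I i) (N15.conv i)).obj p : Type))).symm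

lemma rectB : IsRectBarcode B15 := by
  intro i
  fin_cases i
  · exact ⟨![Set.Ioo (-3) 1, Set.Ioo (-1) 3],
      fun j => by fin_cases j <;>
        exact ⟨Set.nonempty_Ioo.mpr (by norm_num), Set.ordConnected_Ioo⟩, rfl⟩
  · exact ⟨![Set.Ioo (-1) 3, Set.Ioo (-3) 1],
      fun j => by fin_cases j <;>
        exact ⟨Set.nonempty_Ioo.mpr (by norm_num), Set.ordConnected_Ioo⟩, rfl⟩
  · exact ⟨![Set.Ioo (-1) 1, Set.Ioo (-1) 1],
      fun j => by fin_cases j <;>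
        exact ⟨Set.nonempty_Ioo.mpr (by norm_num), Set.ordConnected_Ioo⟩, rfl⟩

lemma rectN : IsRectBarcode N15 := by
  intro i
  fin_cases i
  exact ⟨![Set.Ioo (-2) 2, Set.Ioo (-2) 2],
    fun j => by fin_cases j <;>
      exact ⟨Set.nonempty_Ioo.mpr (by norm_num), Set.ordConnected_Ioo⟩, rfl⟩

lemma matched2 : Matched k 2 B15 N15 := by
  refine ⟨by norm_num, ∅, ∅, Equiv.equivOfIsEmpty _ _, ?_, ?_, fun i => isEmptyElim i⟩
  · intro i _
    fin_cases i
    · rintro ⟨q, hq, hq4⟩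
      have h1 : q ∈ rect2 (-3) 1 (-1) 3 := hq
      have h2 : (fun l => q l + 2 * 2) ∈ rect2 (-3) 1 (-1) 3 := hq4
      rw [mem_rect2] at h1 h2
      obtain ⟨⟨a1, a2⟩, a3, a4⟩ := h1
      obtain ⟨⟨b1, b2⟩, b3, b4⟩ := h2
      linarith
    · rintro ⟨q, hq, hq4⟩
      have h1 : q ∈ rect2 (-1) 3 (-3) 1 := hq
      have h2 : (fun l => q l + 2 * 2) ∈ rect2 (-1) 3 (-3) 1 := hq4
      rw [mem_rect2] at h1 h2
      obtain ⟨⟨a1, a2⟩, a3, a4⟩ := h1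
      obtain ⟨⟨b1, b2⟩, b3, b4⟩ := h2
      linarith
    · rintro ⟨q, hq, hq4⟩
      have h1 : q ∈ rect2 (-1) 1 (-1) 1 := hq
      have h2 : (fun l => q l + 2 * 2) ∈ rect2 (-1) 1 (-1) 1 := hq4
      rw [mem_rect2] at h1 h2
      obtain ⟨⟨a1, a2⟩, a3, a4⟩ := h1
      obtain ⟨⟨b1, b2⟩, b3, b4⟩ := h2
      linarith
  · intro j _
    fin_cases j
    rintro ⟨q, hq, hq4⟩
    have h1 : q ∈ rect2 (-2) 2 (-2) 2 := hq
    have h2 : (fun l => q l + 2 * 2) ∈ rect2 (-2) 2 (-2) 2 := hq4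
    rw [mem_rect2] at h1 h2
    obtain ⟨⟨a1, a2⟩, a3, a4⟩ := h1
    obtain ⟨⟨b1, b2⟩, b3, b4⟩ := h2
    linarith

lemma matched_lower (ε : ℝ) (h : Matched k ε B15 N15) : 2 ≤ ε := by
  obtain ⟨hε, A, A', e, hB, hC, -⟩ := h
  by_contra hlt
  push_neg at hlt
  have hJ : ((0 : Fin 1) : N15.ι) ∈ A' := by
    by_contra h0
    refine hC (0 : Fin 1) h0 ⟨![-ε, -ε], ?_, ?_⟩
    · show (![-ε, -ε] : Fin 2 → ℝ) ∈ rect2 (-2) 2 (-2) 2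
      rw [mem_rect2]
      simp only [Matrix.cons_val_zero, Matrix.cons_val_one, Matrix.head_cons]
      exact ⟨⟨by linarith, by linarith⟩, by linarith, by linarith⟩
    · show (fun l => (![-ε, -ε] : Fin 2 → ℝ) l + 2 * ε) ∈ rect2 (-2) 2 (-2) 2
      rw [mem_rect2]
      simp only [Matrix.cons_val_zero, Matrix.cons_val_one, Matrix.head_cons]
      exact ⟨⟨by linarith, by linarith⟩, by linarith, by linarith⟩
  set i0 : B15.ι := (e.symm ⟨(0 : Fin 1), hJ⟩).1 with hi0
  have huniq : ∀ i' : B15.ι, i' ∈ A → i' = i0 := by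
    intro i' hi'
    have hval : e ⟨i', hi'⟩ = e (e.symm ⟨(0 : Fin 1), hJ⟩) := by
      apply Subtype.ext
      apply Subsingleton.elim ((e ⟨i', hi'⟩ : N15.ι)) _
    have := e.injective hval
    exact congrArg Subtype.val this
  have hnot : ¬(((0 : Fin 3) : B15.ι) ∈ A ∧ ((1 : Fin 3) : B15.ι) ∈ A) := by
    rintro ⟨h0, h1⟩
    have e0 := huniq (0 : Fin 3) h0
    have e1 := huniq (1 : Fin 3) h1
    have : (0 : Fin 3) = (1 : Fin 3) := e0.trans e1.symm
    exact absurd this (by decide)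
  rcases not_and_or.mp hnot with h0 | h1
  · refine hB (0 : Fin 3) h0 ⟨![-1 - ε, 1 - ε], ?_, ?_⟩
    · show (![-1 - ε, 1 - ε] : Fin 2 → ℝ) ∈ rect2 (-3) 1 (-1) 3
      rw [mem_rect2]
      simp only [Matrix.cons_val_zero, Matrix.cons_val_one, Matrix.head_cons]
      exact ⟨⟨by linarith, by linarith⟩, by linarith, by linarith⟩
    · show (fun l => (![-1 - ε, 1 - ε] : Fin 2 → ℝ) l + 2 * ε) ∈ rect2 (-3) 1 (-1) 3
      rw [mem_rect2]
      simp only [Matrix.cons_val_zero, Matrix.cons_val_one, Matrix.head_cons]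
      exact ⟨⟨by linarith, by linarith⟩, by linarith, by linarith⟩
  · refine hB (1 : Fin 3) h1 ⟨![1 - ε, -1 - ε], ?_, ?_⟩
    · show (![1 - ε, -1 - ε] : Fin 2 → ℝ) ∈ rect2 (-1) 3 (-3) 1
      rw [mem_rect2]
      simp only [Matrix.cons_val_zero, Matrix.cons_val_one, Matrix.head_cons]
      exact ⟨⟨by linarith, by linarith⟩, by linarith, by linarith⟩
    · show (fun l => (![1 - ε, -1 - ε] : Fin 2 → ℝ) l + 2 * ε) ∈ rect2 (-1) 3 (-3) 1
      rw [mem_rect2]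
      simp only [Matrix.cons_val_zero, Matrix.cons_val_one, Matrix.head_cons]
      exact ⟨⟨by linarith, by linarith⟩, by linarith, by linarith⟩

lemma dBot_eq_two : dBot k B15 N15 = 2 := by
  apply le_antisymm
  · have := iInf₂_le (f := fun (ε : ℝ) (_ : Matched k ε B15 N15) => ENNReal.ofReal ε)
      2 (matched2 (k := k))
    rw [ENNReal.ofReal_ofNat] at this
    exact this
  · refine le_iInf₂ fun ε hm => ?_
    have h2 := matched_lower ε hm
    calc (2 : ℝ≥0∞) = ENNReal.ofReal 2 := (ENNReal.ofReal_ofNat 2).symm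
      _ ≤ ENNReal.ofReal ε := ENNReal.ofReal_le_ofReal h2

end Ex15
namespace Ex15
open DirectSum

variable {k : Type} [Field k]

set_option maxHeartbeats 1600000

lemma one_mem_objSub {P : Type} [Preorder P] {I : Set P} {p : P} (h : p ∈ I) :
    (1 : k) ∈ objSub k I p := by
  rw [objSub, if_pos h]; trivial

/-- Abstract rank argument: a composite factoring through a "line" (a space with an
injective functional) cannot restrict to the identity on two independent coordinates. -/
lemma rank_core {A B C : Type} [AddCommGroup A] [Module k A] [AddCommGroup B] [Module k B]
    [AddCommGroup C] [Module k C]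
    (F : A →ₗ[k] B) (G : B →ₗ[k] C) (π : B →ₗ[k] k) (hπ : Function.Injective π)
    (x1 x2 : A) (ψ1 ψ2 : C →ₗ[k] k)
    (h11 : ψ1 (G (F x1)) = 1) (h12 : ψ2 (G (F x1)) = 0)
    (h21 : ψ1 (G (F x2)) = 0) (h22 : ψ2 (G (F x2)) = 1) : False := by
  have key : F (π (F x2) • x1 - π (F x1) • x2) = 0 := by
    apply hπ
    rw [map_zero, map_sub, map_smul, map_smul, map_sub, map_smul, map_smul,
      smul_eq_mul, smul_eq_mul]
    ring
  have hlin : G (F (π (F x2) • x1 - π (F x1) • x2))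
      = π (F x2) • G (F x1) - π (F x1) • G (F x2) := by
    rw [map_sub, map_smul, map_smul, map_sub, map_smul, map_smul]
  have hzero : G (F (π (F x2) • x1 - π (F x1) • x2)) = 0 := by rw [key, map_zero]
  have e1 : π (F x2) = 0 := by
    have h1 := congrArg ψ1 (hlin.symm.trans hzero)
    rw [map_zero, map_sub, map_smul, map_smul, h11, h21, smul_eq_mul, smul_eq_mul,
      mul_one, mul_zero, sub_zero] at h1
    exact h1
  have e2 : π (F x1) = 0 := by
    have h2 := congrArg ψ2 (hlin.symm.trans hzero)
    rw [map_zero, map_sub, map_smul, map_smul, h12, h22, smul_eq_mul, smul_eq_mul,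
      mul_zero, mul_one] at h2
    linear_combination -h2
  have hF1 : F x1 = 0 := by
    apply hπ
    rw [map_zero, e2]
  have hend : ψ1 (G (F x1)) = 0 := by rw [hF1, map_zero, map_zero]
  rw [h11] at hend
  exact one_ne_zero hend

def projB (q : Fin 2 → ℝ) (i : Fin 3) :
    (⨁ j : Fin 3, ((intervalModule k (B15.I j) (B15.conv j)).obj q : Type)) →ₗ[k] k where
  toFun z := (objSub k (B15.I i) q).subtype (z i)
  map_add' a b := by
    show (objSub k (B15.I i) q).subtype ((a + b) i)
      = (objSub k (B15.I i) q).subtype (a i) + (objSub k (B15.I i) q).subtype (b i)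
    erw [DirectSum.add_apply, map_add]
  map_smul' c a := by
    show (objSub k (B15.I i) q).subtype ((c • a) i)
      = (RingHom.id k) c • (objSub k (B15.I i) q).subtype (a i)
    erw [DirectSum.smul_apply, map_smul]
    rfl

def projN (q : Fin 2 → ℝ) :
    (⨁ j : Fin 1, ((intervalModule k (N15.I j) (N15.conv j)).obj q : Type)) →ₗ[k] k where
  toFun z := (objSub k (N15.I (0 : Fin 1)) q).subtype (z (0 : Fin 1))
  map_add' a b := by
    show (objSub k (N15.I (0 : Fin 1)) q).subtype ((a + b) (0 : Fin 1))
      = (objSub k (N15.I (0 : Fin 1)) q).subtype (a (0 : Fin 1))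
        + (objSub k (N15.I (0 : Fin 1)) q).subtype (b (0 : Fin 1))
    erw [DirectSum.add_apply, map_add]
  map_smul' c a := by
    show (objSub k (N15.I (0 : Fin 1)) q).subtype ((c • a) (0 : Fin 1))
      = (RingHom.id k) c • (objSub k (N15.I (0 : Fin 1)) q).subtype (a (0 : Fin 1))
    erw [DirectSum.smul_apply, map_smul]
    rfl

lemma interleaving_lower (ε : ℝ) (h : Interleaved k ε (B15.module k) (N15.module k)) :
    1 ≤ ε := by
  obtain ⟨hε, f, g, hfg, -⟩ := h
  by_contra hlt
  push_neg at hlt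
  set p : Fin 2 → ℝ := ![-ε, -ε] with hp
  have hp0 : p ∈ B15.I (0 : Fin 3) := by
    show p ∈ rect2 (-3) 1 (-1) 3
    rw [mem_rect2]
    simp only [hp, Matrix.cons_val_zero, Matrix.cons_val_one, Matrix.head_cons]
    exact ⟨⟨by linarith, by linarith⟩, by linarith, by linarith⟩
  have hp1 : p ∈ B15.I (1 : Fin 3) := by
    show p ∈ rect2 (-1) 3 (-3) 1
    rw [mem_rect2]
    simp only [hp, Matrix.cons_val_zero, Matrix.cons_val_one, Matrix.head_cons]
    exact ⟨⟨by linarith, by linarith⟩, by linarith, by linarith⟩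
  have hq0 : (fun i => p i + ε + ε) ∈ B15.I (0 : Fin 3) := by
    show (fun i => p i + ε + ε) ∈ rect2 (-3) 1 (-1) 3
    rw [mem_rect2]
    simp only [hp, Matrix.cons_val_zero, Matrix.cons_val_one, Matrix.head_cons]
    exact ⟨⟨by linarith, by linarith⟩, by linarith, by linarith⟩
  have hq1 : (fun i => p i + ε + ε) ∈ B15.I (1 : Fin 3) := by
    show (fun i => p i + ε + ε) ∈ rect2 (-1) 3 (-3) 1
    rw [mem_rect2]
    simp only [hp, Matrix.cons_val_zero, Matrix.cons_val_one, Matrix.head_cons]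
    exact ⟨⟨by linarith, by linarith⟩, by linarith, by linarith⟩
  have hom2le : p ≤ fun i => p i + ε + ε := fun i => by
    show p i ≤ p i + ε + ε; linarith
  have hcomp : ∀ y : ((B15.module k).obj p : Type),
      g.app (fun i => p i + ε) (f.app p y) = (B15.module k).map (homOfLE hom2le) y := by
    intro y
    exact congrArg (fun φ => φ y) (hfg p)
  -- the two distinguished elements
  refine rank_core
    (A := ((B15.module k).obj p : Type))
    (B := ⨁ j : Fin 1, ((intervalModule k (N15.I j) (N15.conv j)).obj (fun i => p i + ε) : Type))
    (C := ⨁ j : Fin 3,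
      ((intervalModule k (B15.I j) (B15.conv j)).obj (fun i => p i + ε + ε) : Type))
    (f.app p).hom (g.app (fun i => p i + ε)).hom
    (projN (fun i => p i + ε))
    ?_
    (DirectSum.lof k (Fin 3)
      (fun j => ((intervalModule k (B15.I j) (B15.conv j)).obj p : Type)) (0 : Fin 3)
      ⟨1, one_mem_objSub hp0⟩)
    (DirectSum.lof k (Fin 3)
      (fun j => ((intervalModule k (B15.I j) (B15.conv j)).obj p : Type)) (1 : Fin 3)
      ⟨1, one_mem_objSub hp1⟩)
    (projB (fun i => p i + ε + ε) (0 : Fin 3))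
    (projB (fun i => p i + ε + ε) (1 : Fin 3))
    ?_ ?_ ?_ ?_
  · -- injectivity of π
    intro a b hab
    refine DFinsupp.ext fun j => ?_
    have hj : j = (0 : Fin 1) := Subsingleton.elim _ _
    subst hj
    exact Subtype.ext hab
  · -- h11
    refine (congrArg _ (hcomp _)).trans ?_
    erw [M_map_lof]
    show (objSub k (B15.I (0 : Fin 3)) (fun i => p i + ε + ε)).subtype
      ((intervalModule k (B15.I (0 : Fin 3)) (B15.conv (0 : Fin 3))).map
        (homOfLE hom2le) ⟨1, one_mem_objSub hp0⟩) = 1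
    rw [LinearMap.congr_fun (intervalModule_map_eq (B15.conv (0 : Fin 3)) (homOfLE hom2le))
        ⟨1, one_mem_objSub hp0⟩]
    have hval : ((scalMap 1 (B15.I (0 : Fin 3)) (B15.I (0 : Fin 3)) p (fun i => p i + ε + ε)
        ⟨1, one_mem_objSub hp0⟩ : objSub k (B15.I (0 : Fin 3)) (fun i => p i + ε + ε)) : k)
        = 1 := by
      rw [scalMap_coe, if_pos ⟨hp0, hq0⟩]; exact mul_one 1
    exact hval
  · -- h12
    refine (congrArg _ (hcomp _)).trans ?_
    erw [M_map_lof]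
    show (objSub k (B15.I (1 : Fin 3)) (fun i => p i + ε + ε)).subtype
      ((DirectSum.lof k (Fin 3)
        (fun j => ((intervalModule k (B15.I j) (B15.conv j)).obj (fun i => p i + ε + ε) : Type))
        (0 : Fin 3) ((intervalModule k (B15.I (0 : Fin 3)) (B15.conv (0 : Fin 3))).map
          (homOfLE hom2le) ⟨1, one_mem_objSub hp0⟩)) (1 : Fin 3)) = 0
    erw [DirectSum.lof_eq_of, DirectSum.of_eq_of_ne _ _ _ (by decide), map_zero]
  · -- h21
    refine (congrArg _ (hcomp _)).trans ?_
    erw [M_map_lof]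
    show (objSub k (B15.I (0 : Fin 3)) (fun i => p i + ε + ε)).subtype
      ((DirectSum.lof k (Fin 3)
        (fun j => ((intervalModule k (B15.I j) (B15.conv j)).obj (fun i => p i + ε + ε) : Type))
        (1 : Fin 3) ((intervalModule k (B15.I (1 : Fin 3)) (B15.conv (1 : Fin 3))).map
          (homOfLE hom2le) ⟨1, one_mem_objSub hp1⟩)) (0 : Fin 3)) = 0
    erw [DirectSum.lof_eq_of, DirectSum.of_eq_of_ne _ _ _ (by decide), map_zero]
  · -- h22
    refine (congrArg _ (hcomp _)).trans ?_
    erw [M_map_lof]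
    show (objSub k (B15.I (1 : Fin 3)) (fun i => p i + ε + ε)).subtype
      ((intervalModule k (B15.I (1 : Fin 3)) (B15.conv (1 : Fin 3))).map
        (homOfLE hom2le) ⟨1, one_mem_objSub hp1⟩) = 1
    rw [LinearMap.congr_fun (intervalModule_map_eq (B15.conv (1 : Fin 3)) (homOfLE hom2le))
        ⟨1, one_mem_objSub hp1⟩]
    have hval : ((scalMap 1 (B15.I (1 : Fin 3)) (B15.I (1 : Fin 3)) p (fun i => p i + ε + ε)
        ⟨1, one_mem_objSub hp1⟩ : objSub k (B15.I (1 : Fin 3)) (fun i => p i + ε + ε)) : k)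
        = 1 := by
      rw [scalMap_coe, if_pos ⟨hp1, hq1⟩]; exact mul_one 1
    exact hval

lemma dInt_eq_one : dInt k (B15.module k) (N15.module k) = 1 := by
  apply le_antisymm
  · have := iInf₂_le (f := fun (ε : ℝ) (_ : Interleaved k ε (B15.module k) (N15.module k)) =>
      ENNReal.ofReal ε) 1 (interleaved1 (k := k))
    rw [ENNReal.ofReal_one] at this
    exact this
  · refine le_iInf₂ fun ε hm => ?_
    exact ENNReal.one_le_ofReal.mpr (interleaving_lower ε hm)

end Ex15

/-- **Example 4.1.** The rectangle decomposable `ℝ²`-modules with barcodes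
`B(M) = {(−3,1)×(−1,3), (−1,3)×(−3,1), (−1,1)×(−1,1)}` and `B(N) = {(−2,2)×(−2,2)}`
are `1`-interleaved and satisfy `d_I(M,N) = 1` and `d_B(M,N) = 2`; in particular there
exist p.f.d. rectangle decomposable `ℝ²`-modules with `d_B = 2·d_I`. -/
theorem example_dB_eq_two_dI (k : Type) [Field k] :
    B15.pfd k ∧ N15.pfd k ∧ IsRectBarcode B15 ∧ IsRectBarcode N15 ∧
    Interleaved k 1 (B15.module k) (N15.module k) ∧
    dInt k (B15.module k) (N15.module k) = 1 ∧
    dBot k B15 N15 = 2 := by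
  exact ⟨Ex15.pfdB, Ex15.pfdN, Ex15.rectB, Ex15.rectN, Ex15.interleaved1,
    Ex15.dInt_eq_one, Ex15.dBot_eq_two⟩
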